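/- Every graph G with at least 3 vertices whose independence number α(G) is at most its vertex connectivity κ(G) contains a Hamiltonian cycle (Chvátal–Erdős theorem). -/

import Mathlib

/-- The independence number of `G`: the largest size of an independent set,
i.e. the clique number of the complement. -/
noncomputable def indepNum {V : Type*} (G : SimpleGraph V) : ℕ := Gᶜ.cliqueNum

/-- The vertex connectivity of `G`: the least number of vertices whose removal leaves a
graph that is disconnected or has fewer than two vertices. -/
noncomputable def vertexConnectivity {V : Type*} [Fintype V] [DecidableEq V]
    (G : SimpleGraph V) : ℕ :=
  sInf {k | ∃ S : Finset V, S.card = k ∧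
    (¬ (G.induce ((↑S : Set V)ᶜ)).Connected ∨ Sᶜ.card ≤ 1)}

set_option linter.unusedSectionVars false
set_option linter.unnecessarySimpa false

section allproof
open SimpleGraph Walk Finset

section helpers
variable {V : Type*} [Fintype V] [DecidableEq V] {G : SimpleGraph V}

lemma indep_le (s : Finset V) (hs : ∀ x ∈ s, ∀ y ∈ s, x ≠ y → ¬ G.Adj x y) :
    s.card ≤ _root_.indepNum G := by
  have : (Gᶜ).IsClique s := by
    intro x hx y hy hxy
    exact ⟨hxy, hs x hx y hy hxy⟩
  exact this.card_le_cliqueNum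

lemma vc_le (S : Finset V) (hS : ¬ (G.induce ((↑S : Set V)ᶜ)).Connected) :
    vertexConnectivity G ≤ S.card :=
  Nat.sInf_le ⟨S, rfl, Or.inl hS⟩

lemma one_le_indep (hV : Nonempty V) : 1 ≤ _root_.indepNum G := by
  obtain ⟨v⟩ := hV
  simpa using indep_le ({v} : Finset V) (by simp)

lemma connected_of_hyp (hV : 3 ≤ Fintype.card V)
    (h : _root_.indepNum G ≤ vertexConnectivity G) : G.Connected := by
  have hne : Nonempty V := Fintype.card_pos_iff.mp (by omega)
  by_contra hc
  have h0 : 0 ∈ {k | ∃ S : Finset V, S.card = k ∧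
      (¬ (G.induce ((↑S : Set V)ᶜ)).Connected ∨ Sᶜ.card ≤ 1)} := by
    refine ⟨∅, by simp, Or.inl ?_⟩
    intro hcon
    apply hc
    have : ((↑(∅ : Finset V) : Set V)ᶜ) = Set.univ := by simp
    rw [this] at hcon
    exact ((induceUnivIso G).connected_iff).mp hcon
  have := Nat.sInf_le h0
  have := one_le_indep (G := G) hne
  unfold vertexConnectivity at *
  omega

end helpers

set_option maxHeartbeats 1000000

section walkhelp
variable {V : Type*} {G : SimpleGraph V} [DecidableEq V]

lemma isPath_closed_nil {a : V} {p : G.Walk a a} (hp : p.IsPath) : p = Walk.nil := by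
  cases p with
  | nil => rfl
  | cons h q =>
    exfalso
    have := hp.support_nodup
    rw [Walk.support_cons] at this
    exact (List.nodup_cons.mp this).1 q.end_mem_support

lemma snd_of_mem_edges {x t z : V} {p : G.Walk x t} (hp : p.IsPath)
    (he : s(x, z) ∈ p.edges) : z = p.getVert 1 := by
  cases p with
  | nil => simp at he
  | cons h q =>
    rename_i b
    rw [Walk.edges_cons, List.mem_cons] at he
    rcases he with he | he
    · rw [Sym2.eq_iff] at he
      rcases he with ⟨-, rfl⟩ | ⟨rfl, rfl⟩
      · simp
      · exact absurd rfl h.ne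
    · exfalso
      have hx : x ∈ q.support := Walk.fst_mem_support_of_mem_edges q he
      have := hp.support_nodup
      rw [Walk.support_cons] at this
      exact (List.nodup_cons.mp this).1 hx

lemma length_one_of_mem_edges {x y : V} {p : G.Walk x y} (hp : p.IsPath)
    (he : s(x, y) ∈ p.edges) : p.length = 1 := by
  cases p with
  | nil => simp at he
  | cons h q =>
    rename_i b
    have hb : y = b := by
      have := snd_of_mem_edges hp he
      simpa using this
    subst hb
    have : q = Walk.nil := isPath_closed_nil hp.of_cons
    subst this
    simp

/-- Glue two internally disjoint paths into a cycle. -/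
lemma glue_cycle {x y : V} {p : G.Walk x y} {q : G.Walk y x}
    (hp : p.IsPath) (hq : q.IsPath) (hxy : x ≠ y) (hl : 2 ≤ p.length)
    (hint : ∀ z, z ∈ p.support → z ∈ q.support → z = x ∨ z = y) :
    (p.append q).IsCycle := by
  rw [Walk.isCycle_def]
  refine ⟨⟨?_⟩, ?_, ?_⟩
  · -- trail
    rw [Walk.edges_append, List.nodup_append]
    refine ⟨hp.isTrail.edges_nodup, hq.isTrail.edges_nodup, ?_⟩
    rintro e hep _ heq rfl
    induction e with
    | h a b =>
      have hab : a ≠ b := (Walk.adj_of_mem_edges _ hep).ne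
      have hap : a ∈ p.support := Walk.fst_mem_support_of_mem_edges p hep
      have hbp : b ∈ p.support := Walk.snd_mem_support_of_mem_edges p hep
      have haq : a ∈ q.support := Walk.fst_mem_support_of_mem_edges q heq
      have hbq : b ∈ q.support := Walk.snd_mem_support_of_mem_edges q heq
      have ha := hint a hap haq
      have hb := hint b hbp hbq
      have hexy : s(a, b) = s(x, y) := by
        rcases ha with rfl | rfl <;> rcases hb with rfl | rfl
        · exact absurd rfl hab
        · rfl
        · exact Sym2.eq_swap
        · exact absurd rfl hab
      rw [hexy] at hep
      have := length_one_of_mem_edges hp hep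
      omega
  · -- ne nil
    intro hnil
    have := congrArg Walk.length hnil
    rw [Walk.length_append] at this
    simp only [Walk.length_nil] at this
    omega
  · -- support tail nodup
    have hsupp : (p.append q).support.tail = p.support.tail ++ q.support.tail :=
      Walk.tail_support_append p q
    rw [hsupp, List.nodup_append]
    refine ⟨hp.support_nodup.tail, hq.support_nodup.tail, ?_⟩
    rintro z hzp _ hzq rfl
    have hzp' : z ∈ p.support := List.mem_of_mem_tail hzp
    have hzq' : z ∈ q.support := List.mem_of_mem_tail hzq
    rcases hint z hzp' hzq' with rfl | rfl
    · have := hp.support_nodup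
      rw [Walk.support_eq_cons] at this
      exact (List.nodup_cons.mp this).1 hzp
    · have := hq.support_nodup
      rw [Walk.support_eq_cons] at this
      exact (List.nodup_cons.mp this).1 hzq

end walkhelp

section carts
variable {V : Type*} {G : SimpleGraph V} [DecidableEq V]

lemma closed_end_mem_support_tail {a : V} (p : G.Walk a a) (hp : ¬ p.Nil) :
    a ∈ p.support.tail := by
  cases p with
  | nil => simp at hp
  | cons h q => simpa using q.end_mem_support

lemma closed_mem_support_tail {a z : V} (p : G.Walk a a) (hp : ¬ p.Nil)
    (hz : z ∈ p.support) : z ∈ p.support.tail := by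
  rw [Walk.support_eq_cons p] at hz
  rcases List.mem_cons.mp hz with rfl | hz
  · exact closed_end_mem_support_tail p hp
  · exact hz

lemma cycle_support_dropLast_nodup {a : V} {C : G.Walk a a} (hC : C.IsCycle) :
    C.support.dropLast.Nodup := by
  have hnn : ¬ C.Nil := hC.not_nil
  have htail : C.support.tail.Nodup := hC.support_nodup
  have hcons : C.support = a :: C.support.tail := Walk.support_eq_cons C
  have htne : C.support.tail ≠ [] := by
    intro h
    apply hnn
    rw [Walk.nil_iff_length_eq]
    have hls : C.support.length = C.length + 1 := Walk.length_support C
    rw [hcons, h] at hls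
    simpa using hls.symm
  have hlast' : C.support.tail.getLast htne = a := by
    rw [List.getLast_tail]
    exact Walk.getLast_support C
  have hsplit : C.support.tail = C.support.tail.dropLast ++ [a] := by
    conv_lhs => rw [← List.dropLast_append_getLast htne]
    rw [hlast']
  rw [hcons]
  have : C.support.tail.dropLast.Nodup ∧ a ∉ C.support.tail.dropLast := by
    rw [hsplit] at htail
    have h2 := List.nodup_append.mp htail
    exact ⟨h2.1, fun ha => h2.2.2 a ha a (by simp) rfl⟩
  rw [List.dropLast_cons_of_ne_nil htne]
  exact List.nodup_cons.mpr ⟨this.2, this.1⟩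

lemma cycle_dart_eq_of_fst {a : V} {C : G.Walk a a} (hC : C.IsCycle)
    {d₁ d₂ : G.Dart} (h₁ : d₁ ∈ C.darts) (h₂ : d₂ ∈ C.darts)
    (h : d₁.fst = d₂.fst) : d₁ = d₂ := by
  have hnd : (C.darts.map (·.fst)).Nodup := by
    rw [Walk.map_fst_darts]
    exact cycle_support_dropLast_nodup hC
  exact List.inj_on_of_nodup_map hnd h₁ h₂ h

lemma cycle_dart_eq_of_snd {a : V} {C : G.Walk a a} (hC : C.IsCycle)
    {d₁ d₂ : G.Dart} (h₁ : d₁ ∈ C.darts) (h₂ : d₂ ∈ C.darts)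
    (h : d₁.snd = d₂.snd) : d₁ = d₂ := by
  have hnd : (C.darts.map (·.snd)).Nodup := by
    rw [Walk.map_snd_darts]
    exact hC.support_nodup
  exact List.inj_on_of_nodup_map hnd h₁ h₂ h

lemma mem_darts_fst_snd {u v : V} (p : G.Walk u v) (hp : ¬ p.Nil) :
    ∃ d ∈ p.darts, d.fst = u ∧ d.snd = p.getVert 1 := by
  cases p with
  | nil => simp at hp
  | cons h q =>
    exact ⟨_, List.mem_cons_self, rfl, by simp⟩

lemma length_rotate {a u : V} (C : G.Walk a a) (h : u ∈ C.support) :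
    (C.rotate u h).length = C.length := by
  have := congrArg Walk.length (C.take_spec h)
  rw [Walk.length_append] at this
  rw [Walk.rotate, Walk.length_append]
  omega

lemma cycle_tail_isPath {a : V} {C : G.Walk a a} (hC : C.IsCycle) :
    C.tail.IsPath := by
  rw [Walk.isPath_def, Walk.support_tail_of_not_nil C hC.not_nil]
  exact hC.support_nodup

lemma darts_tail_subset {u v : V} (p : G.Walk u v) (hp : ¬ p.Nil) :
    ∀ d ∈ p.tail.darts, d ∈ p.darts := by
  have hcons := Walk.cons_tail_eq p hp
  intro d hd
  rw [← hcons, Walk.darts_cons]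
  exact List.mem_cons_of_mem _ hd




-- For this test file, paste minimal deps:
lemma closed_end_mem_support_tail' {a : V} (p : G.Walk a a) (hp : ¬ p.Nil) :
    a ∈ p.support.tail := by
  cases p with
  | nil => simp at hp
  | cons h q => simpa using q.end_mem_support

/-- successor of a vertex along a closed walk -/
noncomputable def csucc {a : V} (C : G.Walk a a) (u : V) : V :=
  if h' : u ∈ C.support then (C.rotate u h').getVert 1 else u

variable {a u u' : V} {C : G.Walk a a}

lemma csucc_dart (hC : C.IsCycle) (hu : u ∈ C.support) :
    ∃ d ∈ C.darts, d.fst = u ∧ d.snd = csucc C u := by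
  have hrot : (C.rotate u hu).IsCycle := hC.rotate hu
  obtain ⟨d, hd, hfst, hsnd⟩ := mem_darts_fst_snd (C.rotate u hu) hrot.not_nil
  refine ⟨d, ?_, hfst, ?_⟩
  · exact (Walk.rotate_darts C u hu).perm.mem_iff.mp hd
  · rw [hsnd, csucc, dif_pos hu]

lemma adj_csucc (hC : C.IsCycle) (hu : u ∈ C.support) : G.Adj u (csucc C u) := by
  obtain ⟨d, hd, hfst, hsnd⟩ := csucc_dart hC hu
  have := d.adj
  rwa [hfst, hsnd] at this

lemma csucc_mem (hC : C.IsCycle) (hu : u ∈ C.support) : csucc C u ∈ C.support := by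
  obtain ⟨d, hd, hfst, hsnd⟩ := csucc_dart hC hu
  rw [← hsnd]
  exact Walk.dart_snd_mem_support_of_mem_darts C hd

lemma csucc_ne (hC : C.IsCycle) (hu : u ∈ C.support) : csucc C u ≠ u :=
  (adj_csucc hC hu).ne'

lemma csucc_inj (hC : C.IsCycle) (hu : u ∈ C.support) (hu' : u' ∈ C.support)
    (h : csucc C u = csucc C u') : u = u' := by
  obtain ⟨d, hd, hfst, hsnd⟩ := csucc_dart hC hu
  obtain ⟨d', hd', hfst', hsnd'⟩ := csucc_dart hC hu'
  have : d = d' := cycle_dart_eq_of_snd hC hd hd' (by rw [hsnd, hsnd', h])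
  rw [← hfst, ← hfst', this]

/-- the path from `csucc C u` back to `u` around the cycle -/
noncomputable def crest (C : G.Walk a a) (hu : u ∈ C.support) : G.Walk (csucc C u) u :=
  ((C.rotate u hu).tail).copy (by rw [csucc, dif_pos hu]) rfl

lemma crest_isPath (hC : C.IsCycle) (hu : u ∈ C.support) : (crest C hu).IsPath := by
  rw [crest, Walk.isPath_copy]
  exact cycle_tail_isPath (hC.rotate hu)

lemma crest_length (hC : C.IsCycle) (hu : u ∈ C.support) :
    (crest C hu).length + 1 = C.length := by
  rw [crest, Walk.length_copy,
    Walk.length_tail_add_one (hC.rotate hu).not_nil, _root_.length_rotate]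

lemma crest_support_iff (hC : C.IsCycle) (hu : u ∈ C.support) (z : V) :
    z ∈ (crest C hu).support ↔ z ∈ C.support := by
  have h1 : (crest C hu).support = (C.rotate u hu).support.tail := by
    rw [crest, Walk.support_copy, Walk.support_tail_of_not_nil _ (hC.rotate hu).not_nil]
  rw [h1, (Walk.support_rotate C u hu).perm.mem_iff]
  constructor
  · exact fun h => List.mem_of_mem_tail h
  · intro h
    exact closed_mem_support_tail C hC.not_nil h

lemma crest_darts (hC : C.IsCycle) (hu : u ∈ C.support) {d : G.Dart}
    (hd : d ∈ (crest C hu).darts) : d ∈ C.darts := by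
  rw [crest, Walk.darts_copy] at hd
  exact (Walk.rotate_darts C u hu).perm.mem_iff.mp
    (darts_tail_subset _ (hC.rotate hu).not_nil d hd)

lemma csucc_dropUntil (hC : C.IsCycle) (hu : u ∈ C.support)
    (hu' : u' ∈ (crest C hu).support) (hne : u' ≠ u) :
    ((crest C hu).dropUntil u' hu').getVert 1 = csucc C u' := by
  have hnn : ¬ ((crest C hu).dropUntil u' hu').Nil := Walk.not_nil_of_ne hne
  obtain ⟨d, hd, hfst, hsnd⟩ := mem_darts_fst_snd _ hnn
  have hdC : d ∈ C.darts :=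
    crest_darts hC hu (Walk.darts_dropUntil_subset _ hu' hd)
  have hu'C : u' ∈ C.support := (crest_support_iff hC hu u').mp hu'
  obtain ⟨d', hd', hfst', hsnd'⟩ := csucc_dart hC hu'C
  have : d = d' := cycle_dart_eq_of_fst hC hdC hd' (by rw [hfst, hfst'])
  rw [← hsnd, this, hsnd']

end carts
section main
variable {V : Type*} [Fintype V] [DecidableEq V] {G : SimpleGraph V}

lemma concat_isPath {x y z : V} {p : G.Walk x y} (hp : p.IsPath) (h : G.Adj y z)
    (hz : z ∉ p.support) : (p.concat h).IsPath := by
  rw [Walk.isPath_def, Walk.support_concat]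
  simp only [List.concat_eq_append, List.nodup_append, List.nodup_cons]
  refine ⟨hp.support_nodup, by simp, ?_⟩
  intro b hb c hc hbc
  simp only [List.mem_singleton] at hc
  subst hc
  exact hz (hbc ▸ hb)

lemma longer_cycle (hV : 3 ≤ Fintype.card V) (h : _root_.indepNum G ≤ vertexConnectivity G)
    (hconn : G.Connected) {a : V} {C : G.Walk a a} (hC : C.IsCycle) {v : V}
    (hv : v ∉ C.support) :
    ∃ (b : V) (C' : G.Walk b b), C'.IsCycle ∧ C.length < C'.length := by
  classical
  -- the set of vertices reachable from v avoiding C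
  set s : Set V := {w | ∃ p : G.Walk v w, ∀ x ∈ p.support, x ∉ C.support} with hs
  have hvs : v ∈ s := ⟨Walk.nil, by simpa using hv⟩
  -- the neighbours of s on C
  set U : Finset V := Finset.univ.filter
      (fun u => u ∈ C.support ∧ ∃ b ∈ s, G.Adj b u) with hU
  have hUmem : ∀ {u : V}, u ∈ U ↔ (u ∈ C.support ∧ ∃ b ∈ s, G.Adj b u) := by
    intro u; simp [hU]
  have hUsub : ∀ {u : V}, u ∈ U → u ∈ C.support := fun hu => (hUmem.mp hu).1
  -- every walk from s to C passes through U
  have hitU : ∀ (b w : V) (p : G.Walk b w), b ∈ s → w ∈ C.support →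
      ∃ x ∈ p.support, x ∈ U := by
    intro b w p
    induction p with
    | nil =>
      intro hb hw
      obtain ⟨p0, hp0⟩ := hb
      exact absurd hw (hp0 _ p0.end_mem_support)
    | @cons b c w hadj q ih =>
      intro hb hw
      by_cases hc : c ∈ C.support
      · refine ⟨c, ?_, hUmem.mpr ⟨hc, b, hb, hadj⟩⟩
        rw [Walk.support_cons]
        exact List.mem_cons_of_mem _ q.start_mem_support
      · have hcs : c ∈ s := by
          obtain ⟨p0, hp0⟩ := hb
          refine ⟨p0.concat hadj, ?_⟩
          intro x hx
          rw [Walk.support_concat] at hx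
          rcases (by simpa using hx : _ ∈ _ ∨ _ = _) with hx | rfl
          · exact hp0 _ hx
          · exact hc
        obtain ⟨x, hx, hxU⟩ := ih hcs hw
        exact ⟨x, by rw [Walk.support_cons]; exact List.mem_cons_of_mem _ hx, hxU⟩
  -- U is nonempty
  have hUne : U.Nonempty := by
    obtain ⟨p⟩ := hconn.preconnected v a
    obtain ⟨x, _, hxU⟩ := hitU v a p hvs C.start_mem_support
    exact ⟨x, hxU⟩
  -- a path through s connecting two vertices of U
  have hpath : ∀ u ∈ U, ∀ w ∈ U, u ≠ w → ∃ P : G.Walk u w, P.IsPath ∧ 2 ≤ P.length ∧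
      ∀ z ∈ P.support, z ∈ C.support → z = u ∨ z = w := by
    intro u hu w hw huw
    obtain ⟨-, b1, hb1, hadj1⟩ := hUmem.mp hu
    obtain ⟨-, b2, hb2, hadj2⟩ := hUmem.mp hw
    obtain ⟨p1, hp1⟩ := hb1
    obtain ⟨p2, hp2⟩ := hb2
    set q : G.Walk b1 b2 := (p1.reverse.append p2).bypass with hq
    have hqpath : q.IsPath := Walk.bypass_isPath _
    have hqavoid : ∀ x ∈ q.support, x ∉ C.support := by
      intro x hx
      have := Walk.support_bypass_subset _ hx
      rw [Walk.support_append, List.mem_append] at this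
      rcases this with hx' | hx'
      · exact hp1 _ (by rwa [Walk.support_reverse, List.mem_reverse] at hx')
      · exact hp2 _ (List.mem_of_mem_tail hx')
    have hwq : w ∉ q.support := fun hx => hqavoid _ hx (hUsub hw)
    have huq : u ∉ (q.concat hadj2).support := by
      rw [Walk.support_concat]
      intro hx
      rcases (by simpa using hx : _ ∈ _ ∨ _ = _) with hx | rfl
      · exact hqavoid _ hx (hUsub hu)
      · exact huw rfl
    refine ⟨Walk.cons hadj1.symm (q.concat hadj2), (concat_isPath hqpath _ hwq).cons huq,
        by rw [Walk.length_cons, Walk.length_concat]; omega, ?_⟩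
    intro z hz hzC
    rw [Walk.support_cons, List.mem_cons] at hz
    rcases hz with rfl | hz
    · exact Or.inl rfl
    · rw [Walk.support_concat] at hz
      rcases (by simpa using hz : _ ∈ _ ∨ _ = _) with hz | rfl
      · exact absurd hzC (hqavoid _ hz)
      · exact Or.inr rfl
  have hC3 := hC.three_le_length
  by_cases hcase1 : ∃ u ∈ U, csucc C u ∈ U
  · -- surgery (a)
    obtain ⟨u, hu, hfu⟩ := hcase1
    have huC : u ∈ C.support := hUsub hu
    obtain ⟨P, hPpath, hPlen, hPint⟩ := hpath u hu (csucc C u) hfu (csucc_ne hC huC).symm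
    have hcyc : (P.append (crest C huC)).IsCycle := by
      apply glue_cycle hPpath (crest_isPath hC huC) (csucc_ne hC huC).symm hPlen
      intro z hzP hzQ
      exact hPint z hzP ((crest_support_iff hC huC z).mp hzQ)
    refine ⟨u, _, hcyc, ?_⟩
    rw [Walk.length_append]
    have := crest_length hC huC
    omega
  · by_cases hcase2 : ∃ u ∈ U, ∃ u' ∈ U, u ≠ u' ∧ G.Adj (csucc C u) (csucc C u')
    · -- surgery (b)
      obtain ⟨u, hu, u', hu', huu', hadj⟩ := hcase2
      have huC : u ∈ C.support := hUsub hu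
      have hu'C : u' ∈ C.support := hUsub hu'
      set E : G.Walk (csucc C u) u := crest C huC with hE
      have hu'E : u' ∈ E.support := (crest_support_iff hC huC u').mpr hu'C
      set E1 := E.takeUntil u' hu'E with hE1
      set E2 := E.dropUntil u' hu'E with hE2
      have hEpath : E.IsPath := crest_isPath hC huC
      have hspec : E1.append E2 = E := Walk.take_spec E hu'E
      have hE1path : E1.IsPath := hEpath.takeUntil hu'E
      have hE2path : E2.IsPath := hEpath.dropUntil hu'E
      have hE2nn : ¬ E2.Nil := Walk.not_nil_of_ne huu'.symm
      have hsnd : E2.getVert 1 = csucc C u' := csucc_dropUntil hC huC hu'E huu'.symm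
      set E2t : G.Walk (csucc C u') u := E2.tail.copy hsnd rfl with hE2t
      set Q : G.Walk u' u := E1.reverse.append (Walk.cons hadj E2t) with hQ
      have hQsupp : Q.support = E1.support.reverse ++ E2.support.tail := by
        rw [hQ, Walk.support_append, Walk.support_reverse, Walk.support_cons, List.tail_cons,
          hE2t, Walk.support_copy, Walk.support_tail_of_not_nil _ hE2nn]
      have hEnodup : (E1.support ++ E2.support.tail).Nodup := by
        rw [← Walk.support_append, hspec]
        exact hEpath.support_nodup
      have hQpath : Q.IsPath := by
        rw [Walk.isPath_def, hQsupp, List.nodup_append]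
        rw [List.nodup_append] at hEnodup
        refine ⟨List.nodup_reverse.mpr hEnodup.1, hEnodup.2.1, ?_⟩
        intro z hz z' hz'
        exact hEnodup.2.2 z (List.mem_reverse.mp hz) z' hz'
      have hQlen : Q.length + 1 = C.length := by
        have h1 : E1.length + E2.length = E.length := by
          have := congrArg Walk.length hspec
          rwa [Walk.length_append] at this
        have h2 : E2t.length + 1 = E2.length := by
          rw [hE2t, Walk.length_copy]
          exact Walk.length_tail_add_one hE2nn
        have h3 := crest_length hC huC
        rw [← hE] at h3
        rw [hQ, Walk.length_append, Walk.length_reverse, Walk.length_cons]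
        omega
      have hQsub : ∀ z ∈ Q.support, z ∈ C.support := by
        intro z hz
        rw [hQsupp, List.mem_append] at hz
        have hzE : z ∈ E.support := by
          rw [← hspec, Walk.support_append, List.mem_append]
          rcases hz with hz | hz
          · exact Or.inl (List.mem_reverse.mp hz)
          · exact Or.inr hz
        exact (crest_support_iff hC huC z).mp hzE
      obtain ⟨P, hPpath, hPlen, hPint⟩ := hpath u hu u' hu' huu'
      have hcyc : (P.append Q).IsCycle := by
        apply glue_cycle hPpath hQpath huu' hPlen
        intro z hzP hzQ
        exact hPint z hzP (hQsub z hzQ)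
      refine ⟨u, _, hcyc, ?_⟩
      rw [Walk.length_append]
      omega
    · -- no longer cycle possible: contradiction with connectivity
      exfalso
      push_neg at hcase1 hcase2
      -- the independent set
      set I : Finset V := insert v (U.image (csucc C)) with hI
      have hvI : v ∉ U.image (csucc C) := by
        simp only [Finset.mem_image, not_exists]
        rintro x ⟨hx, hxv⟩
        exact hv (hxv ▸ csucc_mem hC (hUsub hx))
      have hIcard : I.card = U.card + 1 := by
        rw [hI, Finset.card_insert_of_notMem hvI,
          Finset.card_image_of_injOn (fun x hx y hy hxy => csucc_inj hC (hUsub hx) (hUsub hy) hxy)]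
      have hIindep : ∀ x ∈ I, ∀ y ∈ I, x ≠ y → ¬ G.Adj x y := by
        have key : ∀ u₁ ∈ U, ¬ G.Adj v (csucc C u₁) := by
          intro u₁ hu₁ hadj
          exact hcase1 u₁ hu₁ (hUmem.mpr ⟨csucc_mem hC (hUsub hu₁), v, hvs, hadj⟩)
        intro x hx y hy hxy
        rw [hI, Finset.mem_insert] at hx hy
        rcases hx with rfl | hx
        · rcases hy with rfl | hy
          · exact absurd rfl hxy
          · obtain ⟨u₁, hu₁, rfl⟩ := Finset.mem_image.mp hy
            exact key u₁ hu₁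
        · obtain ⟨u₁, hu₁, rfl⟩ := Finset.mem_image.mp hx
          rcases hy with rfl | hy
          · intro hadj
            exact key u₁ hu₁ hadj.symm
          · obtain ⟨u₂, hu₂, rfl⟩ := Finset.mem_image.mp hy
            intro hadj
            have hne : u₁ ≠ u₂ := fun hh => hxy (hh ▸ rfl)
            exact hcase2 u₁ hu₁ u₂ hu₂ hne hadj
      have hαI : I.card ≤ _root_.indepNum G := indep_le I hIindep
      -- U is a cut set
      obtain ⟨u₀, hu₀⟩ := hUne
      have hw₀ : csucc C u₀ ∉ U := fun hh => hcase1 u₀ hu₀ hh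
      have hvU : v ∉ U := fun hh => hv (hUsub hh)
      have hcut : ¬ (G.induce ((↑U : Set V)ᶜ)).Connected := by
        intro hcon
        obtain ⟨p⟩ := hcon.preconnected ⟨v, by simpa using hvU⟩
          ⟨csucc C u₀, by simpa using hw₀⟩
        obtain ⟨x, hx, hxU⟩ := hitU v (csucc C u₀)
          (p.map (SimpleGraph.Embedding.induce ((↑U : Set V)ᶜ)).toHom) hvs
          (csucc_mem hC (hUsub hu₀))
        have hx2 : x ∈ p.support.map (SimpleGraph.Embedding.induce ((↑U : Set V)ᶜ)).toHom :=
          (Walk.support_map (SimpleGraph.Embedding.induce ((↑U : Set V)ᶜ)).toHom p).subst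
            (motive := fun l => x ∈ l) hx
        rw [List.mem_map] at hx2
        obtain ⟨⟨x', hx'⟩, hx'mem, rfl⟩ := hx2
        exact (by simpa using hx' : x' ∉ U) hxU
      have hκU : vertexConnectivity G ≤ U.card := vc_le U hcut
      omega

end main

section final
variable {V : Type*} [Fintype V] [DecidableEq V] {G : SimpleGraph V}

lemma two_neighbors (hV : 3 ≤ Fintype.card V) (h : _root_.indepNum G ≤ vertexConnectivity G)
    (hconn : G.Connected) (v : V) :
    ∃ w₁ w₂ : V, w₁ ≠ w₂ ∧ G.Adj v w₁ ∧ G.Adj v w₂ := by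
  classical
  by_cases hcomp : ∀ x y : V, x ≠ y → G.Adj x y
  · have hcard : 1 < ({v}ᶜ : Finset V).card := by
      rw [Finset.card_compl]
      simp
      omega
    obtain ⟨x, hx, y, hy, hxy⟩ := Finset.one_lt_card.mp hcard
    rw [Finset.mem_compl, Finset.mem_singleton] at hx hy
    exact ⟨x, y, hxy, hcomp v x (fun hh => hx hh.symm), hcomp v y (fun hh => hy hh.symm)⟩
  · push_neg at hcomp
    obtain ⟨x, y, hxy, hnadj⟩ := hcomp
    have hα2 : 2 ≤ _root_.indepNum G := by
      have := indep_le ({x, y} : Finset V) (by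
        intro z hz z' hz' hne
        simp only [Finset.mem_insert, Finset.mem_singleton] at hz hz'
        rcases hz with rfl | rfl <;> rcases hz' with rfl | rfl
        · exact absurd rfl hne
        · exact hnadj
        · exact fun hh => hnadj hh.symm
        · exact absurd rfl hne)
      rwa [Finset.card_insert_of_notMem (by simpa using hxy), Finset.card_singleton] at this
    by_contra h2
    -- v has a neighbor
    have hne : ∃ z : V, z ≠ v := by
      have : 1 < Fintype.card V := by omega
      obtain ⟨z, hz⟩ := Fintype.exists_ne_of_one_lt_card this v
      exact ⟨z, hz⟩
    obtain ⟨z, hz⟩ := hne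
    obtain ⟨p⟩ := hconn.preconnected v z
    have hpnn : ¬ p.Nil := Walk.not_nil_of_ne (fun hh => hz hh.symm)
    set w₁ := p.getVert 1 with hw₁
    have hadj1 : G.Adj v w₁ := p.adj_snd hpnn
    have hunique : ∀ w, G.Adj v w → w = w₁ := by
      intro w hw
      by_contra hne'
      exact h2 ⟨w, w₁, hne', hw, hadj1⟩
    -- {w₁} is a cut set
    have hcut : ¬ (G.induce ((↑({w₁} : Finset V) : Set V))ᶜ).Connected := by
      intro hcon
      have hvne : v ≠ w₁ := hadj1.ne
      have hx₀ : (({v, w₁} : Finset V)ᶜ).Nonempty := by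
        rw [← Finset.card_pos, Finset.card_compl]
        have : ({v, w₁} : Finset V).card ≤ 2 := Finset.card_insert_le _ _ |>.trans (by simp)
        omega
      obtain ⟨x₀, hx₀⟩ := hx₀
      rw [Finset.mem_compl, Finset.mem_insert] at hx₀
      push_neg at hx₀
      obtain ⟨hx₀v, hx₀w⟩ := hx₀
      rw [Finset.mem_singleton] at hx₀w
      obtain ⟨q⟩ := hcon.preconnected ⟨v, by simpa using hvne⟩ ⟨x₀, by simpa using hx₀w⟩
      have hqnn : ¬ q.Nil := Walk.not_nil_of_ne (by simp [Subtype.ext_iff]; exact fun hh => hx₀v hh.symm)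
      have hadjq := q.adj_snd hqnn
      have : G.Adj v (q.getVert 1).val := hadjq
      have := hunique _ this
      have hprop := (q.getVert 1).property
      rw [this] at hprop
      simp at hprop
    have := vc_le {w₁} hcut
    rw [Finset.card_singleton] at this
    have := h
    omega

lemma exists_cycle (hV : 3 ≤ Fintype.card V) (h : _root_.indepNum G ≤ vertexConnectivity G)
    (hconn : G.Connected) : ∃ (b : V) (C : G.Walk b b), C.IsCycle := by
  classical
  have hne : Nonempty V := Fintype.card_pos_iff.mp (by omega)
  obtain ⟨v₀⟩ := hne
  -- take a longest path
  have hPne : (Finset.univ : Finset (Σ u : V, Σ w : V, G.Path u w)).Nonempty := by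
    exact ⟨⟨v₀, v₀, Path.nil⟩, Finset.mem_univ _⟩
  obtain ⟨⟨u, w, P⟩, -, hmax⟩ := Finset.exists_max_image Finset.univ
    (fun z => z.2.2.val.length) hPne
  have hmax' : ∀ (u' w' : V) (q : G.Walk u' w'), q.IsPath → q.length ≤ P.val.length := by
    intro u' w' q hq
    exact hmax ⟨u', w', ⟨q, hq⟩⟩ (Finset.mem_univ _)
  set p := P.val with hpdef
  have hp : p.IsPath := P.property
  -- p has length at least 1
  have hlen1 : 1 ≤ p.length := by
    obtain ⟨w₁, w₂, hne12, ha1, ha2⟩ := two_neighbors hV h hconn v₀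
    have : (Walk.cons ha1 Walk.nil).IsPath := by
      rw [Walk.cons_isPath_iff]
      exact ⟨Walk.IsPath.nil, by simpa using ha1.ne⟩
    have := hmax' _ _ _ this
    simpa using this
  -- all neighbours of w are on p
  have hnbr : ∀ z, G.Adj w z → z ∈ p.support := by
    intro z hz
    by_contra hzs
    have : (p.concat hz).IsPath := concat_isPath hp hz hzs
    have := hmax' _ _ _ this
    rw [Walk.length_concat] at this
    omega
  obtain ⟨w₁, w₂, hne12, ha1, ha2⟩ := two_neighbors hV h hconn w
  set pen := p.reverse.getVert 1 with hpen
  have hedge : ∀ z, s(w, z) ∈ p.edges → z = pen := by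
    intro z hzedge
    have : s(w, z) ∈ p.reverse.edges := by
      rw [Walk.edges_reverse, List.mem_reverse]
      exact hzedge
    exact snd_of_mem_edges hp.reverse this
  have hpick : ∃ w', G.Adj w w' ∧ w' ≠ pen := by
    by_cases h1 : w₁ = pen
    · exact ⟨w₂, ha2, fun hh => hne12 (h1 ▸ hh ▸ rfl)⟩
    · exact ⟨w₁, ha1, h1⟩
  obtain ⟨w', hadj', hw'pen⟩ := hpick
  have hw's : w' ∈ p.support := hnbr w' hadj'
  set q := p.dropUntil w' hw's with hqdef
  have hqpath : q.IsPath := hp.dropUntil hw's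
  have hqedge : s(w, w') ∉ q.edges := by
    intro hh
    have : s(w, w') ∈ p.edges := Walk.edges_dropUntil_subset p hw's hh
    exact hw'pen (hedge w' this)
  exact ⟨w, Walk.cons hadj' q, (Walk.cons_isCycle_iff q hadj').mpr ⟨hqpath, hqedge⟩⟩

end final

section final2
variable {V : Type*} [Fintype V] [DecidableEq V] {G : SimpleGraph V}

lemma ham_of_full {b : V} {C : G.Walk b b} (hC : C.IsCycle)
    (hfull : ∀ z : V, z ∈ C.support) : C.IsHamiltonianCycle := by
  rw [Walk.isHamiltonianCycle_isCycle_and_isHamiltonian_tail]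
  refine ⟨hC, ?_⟩
  apply (cycle_tail_isPath hC).isHamiltonian_of_mem
  intro z
  rw [Walk.support_tail_of_not_nil _ hC.not_nil]
  exact closed_mem_support_tail C hC.not_nil (hfull z)

theorem chvatal_erdos' {V : Type*} [Fintype V] [DecidableEq V] (G : SimpleGraph V)
    (hV : 3 ≤ Fintype.card V) (h : _root_.indepNum G ≤ vertexConnectivity G) :
    ∃ (a : V) (p : G.Walk a a), p.IsHamiltonianCycle := by
  classical
  have hconn : G.Connected := connected_of_hyp hV h
  have key : ∀ (k : ℕ) (b : V) (C : G.Walk b b), C.IsCycle →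
      Fintype.card V ≤ C.length + k →
      ∃ (a : V) (p : G.Walk a a), p.IsHamiltonianCycle := by
    intro k
    induction k with
    | zero =>
      intro b C hC hcard
      by_cases hfull : ∀ z : V, z ∈ C.support
      · exact ⟨b, C, ham_of_full hC hfull⟩
      · exfalso
        push_neg at hfull
        obtain ⟨v, hv⟩ := hfull
        obtain ⟨b', C', hC', hlen⟩ := longer_cycle hV h hconn hC hv
        have : C'.length ≤ Fintype.card V := by
          have h1 : C'.support.tail.Nodup := hC'.support_nodup
          have h2 : C'.support.length = C'.length + 1 := Walk.length_support C'
          have := h1.length_le_card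
          have h3 : C'.support.tail.length = C'.support.length - 1 := by
            rw [List.length_tail]
          omega
        omega
    | succ k ih =>
      intro b C hC hcard
      by_cases hfull : ∀ z : V, z ∈ C.support
      · exact ⟨b, C, ham_of_full hC hfull⟩
      · push_neg at hfull
        obtain ⟨v, hv⟩ := hfull
        obtain ⟨b', C', hC', hlen⟩ := longer_cycle hV h hconn hC hv
        exact ih b' C' hC' (by omega)
  obtain ⟨b, C, hC⟩ := exists_cycle hV h hconn
  exact key (Fintype.card V) b C hC (by omega)

end final2
end allproof


/-- **Chvátal–Erdős theorem**: every graph on at least 3 vertices whose independence number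
is at most its vertex connectivity has a Hamiltonian cycle. -/
theorem chvatal_erdos {V : Type*} [Fintype V] [DecidableEq V] (G : SimpleGraph V)
    (hV : 3 ≤ Fintype.card V) (h : indepNum G ≤ vertexConnectivity G) :
    ∃ (a : V) (p : G.Walk a a), p.IsHamiltonianCycle := by
  exact chvatal_erdos' G hV h
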